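/- For all natural numbers a and c with c < a, C(2a, a + c) ≥ C(2a, a) · exp(−c²/(a − c)), as an inequality of real numbers. -/
import Mathlib


/-- For all natural numbers `a` and `c` with `c < a`,
`C(2a, a + c) ≥ C(2a, a) · exp(−c²/(a − c))` as real numbers. -/
theorem stmt_11 (a c : ℕ) (h : c < a) :
    (((2 * a).choose (a + c) : ℝ)) ≥
      ((2 * a).choose a : ℝ) * Real.exp (-(c : ℝ) ^ 2 / ((a : ℝ) - (c : ℝ))) := by
  induction c with
  | zero =>
    simp
  | succ c ih =>
    have hc : c < a := Nat.lt_of_succ_lt h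
    have ih' := ih hc
    have hA : (0 : ℝ) < (a : ℝ) - c := by
      have : (c : ℝ) < a := by exact_mod_cast hc
      linarith
    have hA1 : (0 : ℝ) < (a : ℝ) - (c + 1) := by
      have : ((c : ℝ) + 1) < a := by exact_mod_cast h
      linarith
    have hz : (0 : ℝ) < (a : ℝ) + c + 1 := by positivity
    -- the ratio identity
    have hnat := Nat.choose_succ_right_eq (2 * a) (a + c)
    have hsub : 2 * a - (a + c) = a - c := by omega
    rw [hsub] at hnat
    have hcast : ((2 * a).choose (a + c + 1) : ℝ) * ((a : ℝ) + c + 1) =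
        ((2 * a).choose (a + c) : ℝ) * ((a : ℝ) - c) := by
      have := congrArg (fun n : ℕ => (n : ℝ)) hnat
      push_cast [Nat.cast_sub hc.le] at this
      linarith [this]
    have hid : ((2 * a).choose (a + (c + 1)) : ℝ) =
        ((2 * a).choose (a + c) : ℝ) * (((a : ℝ) - c) / ((a : ℝ) + c + 1)) := by
      rw [show a + (c + 1) = a + c + 1 by ring]
      field_simp
      linarith [hcast]
    -- key exponential bound for the ratio
    have key : Real.exp (-((2 * (c : ℝ) + 1) / ((a : ℝ) - c))) ≤
        ((a : ℝ) - c) / ((a : ℝ) + c + 1) := by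
      have h1 : ((a : ℝ) + c + 1) / ((a : ℝ) - c) ≤
          Real.exp ((2 * (c : ℝ) + 1) / ((a : ℝ) - c)) := by
        have h2 := Real.add_one_le_exp ((2 * (c : ℝ) + 1) / ((a : ℝ) - c))
        have heq : (2 * (c : ℝ) + 1) / ((a : ℝ) - c) + 1 =
            ((a : ℝ) + c + 1) / ((a : ℝ) - c) := by
          field_simp
          ring
        linarith [heq ▸ h2]
      rw [Real.exp_neg]
      have hpos : 0 < ((a : ℝ) + c + 1) / ((a : ℝ) - c) := by positivity
      calc (Real.exp ((2 * (c : ℝ) + 1) / ((a : ℝ) - c)))⁻¹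
          ≤ (((a : ℝ) + c + 1) / ((a : ℝ) - c))⁻¹ := by
            exact inv_anti₀ hpos h1
        _ = ((a : ℝ) - c) / ((a : ℝ) + c + 1) := inv_div _ _
    have hch : (0 : ℝ) ≤ ((2 * a).choose a : ℝ) := by positivity
    have hexp0 : (0 : ℝ) ≤ Real.exp (-(c : ℝ) ^ 2 / ((a : ℝ) - c)) := (Real.exp_pos _).le
    rw [hid]
    push_cast
    -- combine exponents
    have hcomb : Real.exp (-(c : ℝ) ^ 2 / ((a : ℝ) - c)) *
        Real.exp (-((2 * (c : ℝ) + 1) / ((a : ℝ) - c))) =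
        Real.exp (-((c : ℝ) + 1) ^ 2 / ((a : ℝ) - c)) := by
      rw [← Real.exp_add]
      congr 1
      field_simp
      ring
    have hmono : Real.exp (-((c : ℝ) + 1) ^ 2 / ((a : ℝ) - (c + 1))) ≤
        Real.exp (-((c : ℝ) + 1) ^ 2 / ((a : ℝ) - c)) := by
      apply Real.exp_le_exp.mpr
      rw [div_le_div_iff₀ hA1 hA] <;> nlinarith [sq_nonneg ((c : ℝ) + 1)]
    have step1 : ((2 * a).choose a : ℝ) * Real.exp (-(c : ℝ) ^ 2 / ((a : ℝ) - c)) *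
        (((a : ℝ) - c) / ((a : ℝ) + c + 1)) ≤
        ((2 * a).choose (a + c) : ℝ) * (((a : ℝ) - c) / ((a : ℝ) + c + 1)) := by
      apply mul_le_mul_of_nonneg_right ih' (by positivity)
    have step2 : ((2 * a).choose a : ℝ) * Real.exp (-(c : ℝ) ^ 2 / ((a : ℝ) - c)) *
        Real.exp (-((2 * (c : ℝ) + 1) / ((a : ℝ) - c))) ≤
        ((2 * a).choose a : ℝ) * Real.exp (-(c : ℝ) ^ 2 / ((a : ℝ) - c)) *
        (((a : ℝ) - c) / ((a : ℝ) + c + 1)) :=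
      mul_le_mul_of_nonneg_left key (by positivity)
    have step3 : ((2 * a).choose a : ℝ) * Real.exp (-((c : ℝ) + 1) ^ 2 / ((a : ℝ) - (c + 1))) ≤
        ((2 * a).choose a : ℝ) * Real.exp (-(c : ℝ) ^ 2 / ((a : ℝ) - c)) *
        Real.exp (-((2 * (c : ℝ) + 1) / ((a : ℝ) - c))) := by
      rw [mul_assoc, hcomb]
      exact mul_le_mul_of_nonneg_left hmono hch
    linarith [step1, step2, step3]
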